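/- Let N ≥ 1 and m ≥ 1. For every closed cube Q ⊂ ℝ^N with sides parallel to the axes, side length ℓ(Q) and center x_Q, there exists a function φ_Q ∈ C^∞(ℝ^N × ℝ^N) with the following properties: (i) for each x ∈ ℝ^N, the function y ↦ φ_Q(x,y) is supported in the interior of Q; (ii) for every f ∈ L^1(Q), the function x ↦ ∫_Q f(y) φ_Q(x,y) dy is a polynomial of degree at most m−1; (iii) P(x) = ∫ P(y) φ_Q(x,y) dy for every x ∈ ℝ^N and every polynomial P of degree at most m−1; (iv) for every a > 0 and all multi-indices α, β there is a constant C_{m,a,α,β} > 0, independent of Q, such that |∂_x^α ∂_y^β φ_Q(x,y)| ≤ C_{m,a,α,β} ℓ(Q)^{−N−|α|−|β|} for all y ∈ ℝ^N and all x in the cube with center x_Q and side length a·ℓ(Q). -/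

import Mathlib

open MeasureTheory Set Metric Filter
open scoped ENNReal NNReal Topology

noncomputable section

abbrev RN (N : ℕ) := EuclideanSpace ℝ (Fin N)

variable {N : ℕ}

/-- Partial derivative in the `i`-th coordinate direction. -/
def pd {E : Type*} [NormedAddCommGroup E] [NormedSpace ℝ E] (i : Fin N)
    (f : RN N → E) : RN N → E :=
  fun x => fderiv ℝ f x (EuclideanSpace.single i 1)

/-- Multi-index partial derivative `∂^α`. -/
def md {E : Type*} [NormedAddCommGroup E] [NormedSpace ℝ E] (α : Fin N → ℕ)
    (f : RN N → E) : RN N → E :=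
  ((List.ofFn fun i : Fin N => (pd i)^[α i]).foldr (· ∘ ·) id) f

/-- Order `|α|` of a multi-index. -/
def mOrder (α : Fin N → ℕ) : ℕ := ∑ i, α i

/-- Multi-indices of order at most `k`. -/
def idxLe (N k : ℕ) : Finset (Fin N → ℕ) :=
  (Fintype.piFinset fun _ : Fin N => Finset.range (k + 1)).filter fun α => mOrder α ≤ k

/-- Multi-indices of order exactly `k`. -/
def idxEq (N k : ℕ) : Finset (Fin N → ℕ) :=
  (Fintype.piFinset fun _ : Fin N => Finset.range (k + 1)).filter fun α => mOrder α = k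

/-- The dilate `φ_t(z) = t^{-N} φ(z/t)`. -/
def dil (φ : RN N → ℝ) (t : ℝ) (z : RN N) : ℝ := φ (t⁻¹ • z) / t ^ N

/-- Convolution `(u * φ_t)(x)`. -/
def convAt (φ : RN N → ℝ) (t : ℝ) (u : RN N → ℂ) (x : RN N) : ℂ :=
  ∫ y, dil φ t (x - y) • u y

/-- The small maximal function `sup_{0<t<1} |(u * φ_t)(x)|`. -/
def smallMax (φ : RN N → ℝ) (u : RN N → ℂ) (x : RN N) : ℝ≥0∞ :=
  ⨆ t ∈ Ioo (0 : ℝ) 1, ENNReal.ofReal ‖convAt φ t u x‖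

/-- The localizable Hardy space quasi-norm `‖u‖_{h^p}` (for `0 < p < ∞`). -/
def hNorm (φ : RN N → ℝ) (p : ℝ) (u : RN N → ℂ) : ℝ≥0∞ :=
  (∫⁻ x, smallMax φ u x ^ p) ^ (1 / p)

/-- A fixed radial nonnegative smooth function supported in the unit ball with integral 1. -/
structure GoodPhi (φ : RN N → ℝ) : Prop where
  smooth : ContDiff ℝ (⊤ : ℕ∞) φ
  nonneg : ∀ x, 0 ≤ φ x
  radial : ∀ x y : RN N, ‖x‖ = ‖y‖ → φ x = φ y
  supp : tsupport φ ⊆ closedBall 0 1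
  int_one : ∫ x, φ x = 1

/-- The closed axes-parallel cube with center `c` and side length `ℓ`. -/
def cube (c : RN N) (ℓ : ℝ) : Set (RN N) := {y | ∀ i, |y i - c i| ≤ ℓ / 2}

/-- The open axes-parallel cube with center `c` and side length `ℓ`
(the interior of `cube c ℓ` when `ℓ > 0`). -/
def openCube (c : RN N) (ℓ : ℝ) : Set (RN N) := {y | ∀ i, |y i - c i| < ℓ / 2}

/-- `P` is a (complex) polynomial in `N` variables of degree at most `d`. -/
def IsPolyDegLE (N d : ℕ) (P : RN N → ℂ) : Prop :=
  ∃ c : (Fin N → ℕ) → ℂ, ∀ x : RN N, P x = ∑ α ∈ idxLe N d, c α * ∏ i, ((x i : ℝ) : ℂ) ^ α i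


namespace St2


def bump : ContDiffBump (0:ℝ) := ⟨1/8, 1/4, by norm_num, by norm_num⟩

def ψ : ℝ → ℝ := fun t => bump t

lemma ψ_smooth : ContDiff ℝ (⊤:ℕ∞) ψ := bump.contDiff

lemma ψ_nonneg (t : ℝ) : 0 ≤ ψ t := bump.nonneg

lemma ψ_zero {t : ℝ} (ht : ¬ |t| < 1/4) : ψ t = 0 := by
  have : t ∉ Function.support (fun t => bump t) := by
    rw [bump.support_eq]
    simp only [mem_ball, Real.dist_eq, sub_zero]
    exact fun h => ht (by simpa [bump] using h)
  simpa [Function.mem_support, not_not, ψ] using this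

lemma ψ_pos {t : ℝ} (ht : |t| < 1/4) : 0 < ψ t := by
  apply bump.pos_of_mem_ball
  simp only [mem_ball, Real.dist_eq, sub_zero]
  simpa [bump] using ht

lemma ψ_hcs : HasCompactSupport ψ := by
  apply HasCompactSupport.intro (isCompact_closedBall (0:ℝ) (1/4))
  intro t ht
  apply ψ_zero
  simp only [mem_closedBall, Real.dist_eq, sub_zero, not_le] at ht
  intro h; linarith [h, ht]

lemma mint (r : ℕ) : Integrable (fun t : ℝ => t ^ r * ψ t) := by
  apply Continuous.integrable_of_hasCompactSupport
  · exact (continuous_pow r).mul (ψ_smooth.continuous)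
  · exact HasCompactSupport.mul_left ψ_hcs

variable (m : ℕ)

def Tmat : Matrix (Fin m) (Fin m) ℝ := fun j k => ∫ t : ℝ, t ^ ((j:ℕ)+(k:ℕ)) * ψ t

lemma poly_ne (x : Fin m → ℝ) (hx : x ≠ 0) : ∃ t : ℝ, |t| < 1/4 ∧ (∑ j, x j * t ^ (j:ℕ)) ≠ 0 := by
  by_contra h
  push_neg at h
  apply hx
  set P : Polynomial ℝ := ∑ j : Fin m, Polynomial.C (x j) * Polynomial.X ^ (j:ℕ) with hP
  have hev : ∀ t : ℝ, P.eval t = ∑ j, x j * t ^ (j:ℕ) := by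
    intro t; simp [hP, Polynomial.eval_finset_sum]
  have hroots : {t : ℝ | P.IsRoot t}.Infinite := by
    apply Set.Infinite.mono (s := Ioo (-(1/4):ℝ) (1/4))
    · intro t ht
      simp only [Set.mem_setOf_eq, Polynomial.IsRoot, hev]
      exact h t (abs_lt.mpr ⟨ht.1, ht.2⟩)
    · exact Set.Ioo_infinite (by norm_num)
  have hP0 : P = 0 := Polynomial.eq_zero_of_infinite_isRoot P hroots
  funext j
  have := congrArg (Polynomial.coeff · (j:ℕ)) hP0
  simp only [hP, Polynomial.finset_sum_coeff, Polynomial.coeff_C_mul, Polynomial.coeff_X_pow,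
    Polynomial.coeff_zero] at this
  rw [Finset.sum_eq_single j] at this
  · simpa using this
  · intro b _ hb
    rw [if_neg (fun h : (j:ℕ) = (b:ℕ) => hb (Fin.val_injective h).symm), mul_zero]
  · simp

lemma Tmat_posdef : (Tmat m).PosDef := by
  rw [Matrix.posDef_iff_dotProduct_mulVec]
  constructor
  · ext j k
    simp [Matrix.IsHermitian, Tmat, Matrix.conjTranspose_apply, add_comm]
  · intro x hx
    have key : dotProduct (star x) ((Tmat m).mulVec x) = ∫ t : ℝ, (∑ j, x j * t ^ (j:ℕ))^2 * ψ t := by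
      have : ∀ t : ℝ, (∑ j, x j * t ^ (j:ℕ))^2 * ψ t
          = ∑ j : Fin m, ∑ k : Fin m, (x j * x k) * (t ^ ((j:ℕ)+(k:ℕ)) * ψ t) := by
        intro t
        rw [sq, Finset.sum_mul_sum, Finset.sum_mul]
        congr 1; ext j
        rw [Finset.sum_mul]
        congr 1; ext k
        rw [pow_add]; ring
      rw [MeasureTheory.integral_congr_ae (Filter.Eventually.of_forall this)]
      rw [MeasureTheory.integral_finset_sum]
      · simp only [dotProduct, Matrix.mulVec, star_trivial]
        congr 1; ext j
        rw [MeasureTheory.integral_finset_sum]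
        · rw [Finset.mul_sum]
          congr 1; ext k
          rw [MeasureTheory.integral_const_mul]
          simp only [Tmat]; ring
        · intro k _; exact (mint _).const_mul _
      · intro j _
        apply MeasureTheory.integrable_finset_sum
        intro k _; exact (mint _).const_mul _
    rw [key]
    obtain ⟨t₀, ht₀, hne⟩ := poly_ne m x hx
    have hnn : 0 ≤ fun t : ℝ => (∑ j, x j * t ^ (j:ℕ))^2 * ψ t := by
      intro t
      have := ψ_nonneg t
      positivity
    have hint : Integrable (fun t : ℝ => (∑ j, x j * t ^ (j:ℕ))^2 * ψ t) := by
      have : (fun t : ℝ => (∑ j, x j * t ^ (j:ℕ))^2 * ψ t)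
          = fun t => ∑ j : Fin m, ∑ k : Fin m, (x j * x k) * (t ^ ((j:ℕ)+(k:ℕ)) * ψ t) := by
        ext t
        rw [sq, Finset.sum_mul_sum, Finset.sum_mul]
        congr 1; ext j
        rw [Finset.sum_mul]
        congr 1; ext k
        rw [pow_add]; ring
      rw [this]
      apply MeasureTheory.integrable_finset_sum
      intro j _
      apply MeasureTheory.integrable_finset_sum
      intro k _; exact (mint _).const_mul _
    rw [MeasureTheory.integral_pos_iff_support_of_nonneg hnn hint]
    have hcont : Continuous (fun t : ℝ => (∑ j, x j * t ^ (j:ℕ))^2 * ψ t) := by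
      apply Continuous.mul _ ψ_smooth.continuous
      exact (continuous_finset_sum _ fun j _ => continuous_const.mul (continuous_pow _)).pow 2
    have hopen : IsOpen (Function.support fun t : ℝ => (∑ j, x j * t ^ (j:ℕ))^2 * ψ t) :=
      hcont.isOpen_support
    have hmem : t₀ ∈ Function.support fun t : ℝ => (∑ j, x j * t ^ (j:ℕ))^2 * ψ t := by
      simp only [Function.mem_support]
      have h1 : 0 < (∑ j, x j * t₀ ^ (j:ℕ))^2 := by positivity
      have h2 := ψ_pos ht₀
      positivity
    exact hopen.measure_pos volume ⟨t₀, hmem⟩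


lemma Tmat_det_unit : IsUnit (Tmat m).det := by
  have := (Tmat_posdef m).det_pos
  exact isUnit_iff_ne_zero.mpr (ne_of_gt this)

def Smat : Matrix (Fin m) (Fin m) ℝ := (Tmat m)⁻¹

lemma Tmat_mul_Smat : Tmat m * Smat m = 1 :=
  Matrix.mul_nonsing_inv _ (Tmat_det_unit m)

/-- the 1-D biorthogonal functions -/
def u (k : Fin m) : ℝ → ℝ := fun t => (∑ l : Fin m, Smat m l k * t ^ (l:ℕ)) * ψ t

lemma u_smooth (k : Fin m) : ContDiff ℝ (⊤:ℕ∞) (u m k) := by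
  apply ContDiff.mul _ ψ_smooth
  exact ContDiff.sum fun l _ => (contDiff_id.pow _).const_smul (Smat m l k)

lemma u_zero (k : Fin m) {t : ℝ} (ht : ¬ |t| < 1/4) : u m k t = 0 := by
  simp [u, ψ_zero ht]

lemma u_hcs (k : Fin m) : HasCompactSupport (u m k) := by
  apply HasCompactSupport.intro (isCompact_closedBall (0:ℝ) (1/4))
  intro t ht
  apply u_zero
  simp only [mem_closedBall, Real.dist_eq, sub_zero, not_le] at ht
  intro h; linarith

lemma u_int (r : ℕ) (k : Fin m) : Integrable (fun t : ℝ => t ^ r * u m k t) := by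
  apply Continuous.integrable_of_hasCompactSupport
  · exact (continuous_pow r).mul ((u_smooth m k).continuous)
  · exact HasCompactSupport.mul_left (u_hcs m k)

lemma u_moment (j k : Fin m) :
    ∫ t : ℝ, t ^ (j:ℕ) * u m k t = if (j:ℕ) = (k:ℕ) then 1 else 0 := by
  have hre : ∀ t : ℝ, t ^ (j:ℕ) * u m k t
      = ∑ l : Fin m, Smat m l k * (t ^ ((j:ℕ)+(l:ℕ)) * ψ t) := by
    intro t
    simp only [u, Finset.sum_mul, Finset.mul_sum]
    congr 1; ext l
    rw [pow_add]; ring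
  rw [MeasureTheory.integral_congr_ae (Filter.Eventually.of_forall hre),
    MeasureTheory.integral_finset_sum _ (fun l _ => (mint _).const_mul _)]
  have : ∑ l : Fin m, ∫ t : ℝ, Smat m l k * (t ^ ((j:ℕ)+(l:ℕ)) * ψ t)
      = ∑ l : Fin m, Tmat m j l * Smat m l k := by
    congr 1; ext l
    rw [MeasureTheory.integral_const_mul]
    simp only [Tmat]; ring
  rw [this, ← Matrix.mul_apply, Tmat_mul_Smat, Matrix.one_apply]
  by_cases h : j = k
  · simp [h]
  · rw [if_neg h, if_neg (fun hv => h (Fin.val_injective hv))]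



section Poly
variable {N : ℕ}

lemma mem_idxLe {d : ℕ} {α : Fin N → ℕ} : α ∈ idxLe N d ↔ mOrder α ≤ d := by
  constructor
  · intro h; exact (Finset.mem_filter.mp h).2
  · intro h
    refine Finset.mem_filter.mpr ⟨?_, h⟩
    refine Fintype.mem_piFinset.mpr fun i => ?_
    refine Finset.mem_range.mpr (Nat.lt_succ_of_le (le_trans ?_ h))
    exact Finset.single_le_sum (f := α) (fun j _ => Nat.zero_le _) (Finset.mem_univ i)

/-- monomial -/
def mono (α : Fin N → ℕ) : RN N → ℂ := fun x => ∏ i, ((x i : ℝ) : ℂ) ^ α i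

lemma isPoly_iff {d : ℕ} {P : RN N → ℂ} :
    IsPolyDegLE N d P ↔ ∃ c : (Fin N → ℕ) → ℂ, ∀ x, P x = ∑ α ∈ idxLe N d, c α * mono α x :=
  Iff.rfl

lemma isPoly_sum {d : ℕ} {ι : Type*} (s : Finset ι) (f : ι → RN N → ℂ)
    (h : ∀ i ∈ s, IsPolyDegLE N d (f i)) :
    IsPolyDegLE N d (fun x => ∑ i ∈ s, f i x) := by
  classical
  induction s using Finset.cons_induction with
  | empty => exact ⟨0, by simp⟩
  | cons a s ha ih =>
    obtain ⟨c1, hc1⟩ := h a (Finset.mem_cons_self a s)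
    obtain ⟨c2, hc2⟩ := ih fun i hi => h i (Finset.mem_cons.mpr (Or.inr hi))
    refine ⟨c1 + c2, fun x => ?_⟩
    have hc2' : ∑ i ∈ s, f i x = ∑ α ∈ idxLe N d, c2 α * ∏ i, ((x i : ℝ) : ℂ) ^ α i := hc2 x
    show ∑ i ∈ Finset.cons a s ha, f i x = _
    rw [Finset.sum_cons, hc1, hc2', ← Finset.sum_add_distrib]
    congr 1; ext α
    simp only [Pi.add_apply]; ring

lemma expand_core (d : ℕ) (β : Fin N → ℕ) (hβ : mOrder β ≤ d) (a : ℝ) (b : Fin N → ℝ) :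
    ∃ cf : (Fin N → ℕ) → ℂ, ∀ v : Fin N → ℝ,
      ∏ i, ((a * v i + b i : ℝ) : ℂ) ^ β i
        = ∑ γ ∈ idxLe N d, cf γ * ∏ i, ((v i : ℝ) : ℂ) ^ γ i := by
  classical
  set piF := Fintype.piFinset fun i : Fin N => Finset.range (β i + 1) with hpiF
  set cf0 : (Fin N → ℕ) → ℂ :=
    fun γ => ∏ i, ((a:ℂ) ^ γ i * (b i : ℂ) ^ (β i - γ i) * (Nat.choose (β i) (γ i) : ℂ)) with hcf0
  refine ⟨fun γ => if γ ∈ piF then cf0 γ else 0, fun v => ?_⟩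
  have expand1 : ∀ i : Fin N, ((a * v i + b i : ℝ) : ℂ) ^ β i
      = ∑ j ∈ Finset.range (β i + 1),
          ((a:ℂ) ^ j * (b i : ℂ) ^ (β i - j) * (Nat.choose (β i) j : ℂ)) * ((v i : ℝ) : ℂ) ^ j := by
    intro i
    push_cast
    rw [add_pow]
    congr 1; ext j
    rw [mul_pow]; ring
  calc ∏ i, ((a * v i + b i : ℝ) : ℂ) ^ β i
      = ∏ i, ∑ j ∈ Finset.range (β i + 1),
          ((a:ℂ) ^ j * (b i : ℂ) ^ (β i - j) * (Nat.choose (β i) j : ℂ)) * ((v i : ℝ) : ℂ) ^ j := by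
        exact Finset.prod_congr rfl fun i _ => expand1 i
    _ = ∑ γ ∈ piF, ∏ i, (((a:ℂ) ^ γ i * (b i : ℂ) ^ (β i - γ i) * (Nat.choose (β i) (γ i) : ℂ))
          * ((v i : ℝ) : ℂ) ^ γ i) := by
        rw [Finset.prod_univ_sum]
    _ = ∑ γ ∈ piF, cf0 γ * ∏ i, ((v i : ℝ) : ℂ) ^ γ i := by
        refine Finset.sum_congr rfl fun γ _ => ?_
        rw [hcf0, ← Finset.prod_mul_distrib]
    _ = ∑ γ ∈ idxLe N d, (if γ ∈ piF then cf0 γ else 0) * ∏ i, ((v i : ℝ) : ℂ) ^ γ i := by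
        have hsub : piF ⊆ idxLe N d := by
          intro γ hγ
          rw [mem_idxLe]
          have hle : ∀ i, γ i ≤ β i := by
            intro i
            have := Fintype.mem_piFinset.mp hγ i
            exact Nat.lt_succ_iff.mp (Finset.mem_range.mp this)
          calc mOrder γ ≤ mOrder β := Finset.sum_le_sum fun i _ => hle i
            _ ≤ d := hβ
        have hext := Finset.sum_subset hsub
          (f := fun γ => (if γ ∈ piF then cf0 γ else 0) * ∏ i, ((v i : ℝ) : ℂ) ^ γ i)
          (fun γ _ hγ => by simp [hγ])
        rw [← hext]
        exact Finset.sum_congr rfl fun γ hγ => by simp [hγ]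

/-- shifted scaled monomial -/
def sh (c : RN N) (ℓ : ℝ) (α : Fin N → ℕ) : RN N → ℂ :=
  fun x => ∏ i, (((x i - c i) / ℓ : ℝ) : ℂ) ^ α i

lemma sh_isPoly {d : ℕ} (c : RN N) {ℓ : ℝ} (hℓ : ℓ ≠ 0) {α : Fin N → ℕ}
    (hα : α ∈ idxLe N d) : IsPolyDegLE N d (sh c ℓ α) := by
  obtain ⟨cf, hcf⟩ := expand_core d α (mem_idxLe.mp hα) ℓ⁻¹ (fun i => -(c i) * ℓ⁻¹)
  refine ⟨cf, fun x => ?_⟩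
  have := hcf (fun i => x i)
  simp only at this
  rw [← this]
  unfold sh
  congr 1; ext i
  congr 2
  field_simp
  ring

lemma isPoly_sh_rep {d : ℕ} {P : RN N → ℂ} (hP : IsPolyDegLE N d P) (c : RN N) {ℓ : ℝ}
    (hℓ : ℓ ≠ 0) : ∃ cf : (Fin N → ℕ) → ℂ, ∀ x, P x = ∑ α ∈ idxLe N d, cf α * sh c ℓ α x := by
  classical
  obtain ⟨cb, hcb⟩ := hP
  set F : (Fin N → ℕ) → ((Fin N → ℕ) → ℂ) := fun β =>
    if h : mOrder β ≤ d then Classical.choose (expand_core d β h ℓ (fun i => c i)) else 0 with hF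
  refine ⟨fun γ => ∑ β ∈ idxLe N d, cb β * F β γ, fun x => ?_⟩
  have key : ∀ β ∈ idxLe N d, (∏ i, ((x i : ℝ) : ℂ) ^ β i)
      = ∑ γ ∈ idxLe N d, F β γ * sh c ℓ γ x := by
    intro β hβ
    have hβ' := mem_idxLe.mp hβ
    have hspec := Classical.choose_spec (expand_core d β hβ' ℓ (fun i => c i))
      (fun i => (x i - c i) / ℓ)
    simp only at hspec
    rw [hF]
    simp only [dif_pos hβ', sh]
    rw [← hspec]
    congr 1; ext i
    congr 2
    field_simp
    ring
  rw [hcb x]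
  rw [Finset.sum_congr rfl fun β hβ => by rw [key β hβ]]
  rw [Finset.sum_congr rfl fun β (hβ : β ∈ idxLe N d) => (Finset.mul_sum _ _ _)]
  rw [Finset.sum_comm]
  refine Finset.sum_congr rfl fun γ _ => ?_
  rw [Finset.sum_mul]
  refine Finset.sum_congr rfl fun β _ => ?_
  ring

end Poly

section Construction
variable {N : ℕ}

lemma cont_coord (i : Fin N) : Continuous (fun y : RN N => y i) :=
  (EuclideanSpace.proj (𝕜 := ℝ) i).continuous

/-- 1-D building block, `ℕ`-indexed -/
def uu (m k : ℕ) : ℝ → ℝ := if h : k < m then u m ⟨k, h⟩ else 0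

lemma uu_smooth (m k : ℕ) : ContDiff ℝ (⊤:ℕ∞) (uu m k) := by
  unfold uu; split
  · exact u_smooth m _
  · exact contDiff_const

lemma uu_zero (m k : ℕ) {t : ℝ} (ht : ¬ |t| < 1/4) : uu m k t = 0 := by
  unfold uu; split
  · exact u_zero m _ ht
  · rfl

lemma uu_moment (m : ℕ) {b k : ℕ} (hb : b < m) (hk : k < m) :
    ∫ t : ℝ, t ^ b * uu m k t = if b = k then 1 else 0 := by
  unfold uu
  rw [dif_pos hk]
  exact u_moment m ⟨b, hb⟩ ⟨k, hk⟩

lemma uu_int (m b k : ℕ) : MeasureTheory.Integrable (fun t : ℝ => t ^ b * uu m k t) := by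
  unfold uu; split
  · exact u_int m b _
  · simpa using MeasureTheory.integrable_zero _ _ _

def qfun (m : ℕ) (c : RN N) (ℓ : ℝ) (γ : Fin N → ℕ) : RN N → ℝ :=
  fun y => (∏ i, uu m (γ i) ((y i - c i) / ℓ)) / ℓ ^ N

lemma qfun_zero (m : ℕ) (c : RN N) (ℓ : ℝ) (γ : Fin N → ℕ) {y : RN N}
    (hy : ∃ i, ¬ |(y i - c i) / ℓ| < 1/4) : qfun m c ℓ γ y = 0 := by
  obtain ⟨i, hi⟩ := hy
  unfold qfun
  rw [Finset.prod_eq_zero (Finset.mem_univ i) (uu_zero m (γ i) hi), zero_div]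

lemma cube_closed (c : RN N) (r : ℝ) : IsClosed (cube c r) := by
  have : cube c r = ⋂ i, {y : RN N | |y i - c i| ≤ r/2} := by
    ext y; simp [cube, Set.mem_iInter]
  rw [this]
  refine isClosed_iInter fun i => ?_
  have hc : Continuous (fun y : RN N => |y i - c i|) :=
    ((cont_coord i).sub continuous_const).abs
  exact isClosed_le hc continuous_const

lemma cube_compact (c : RN N) (r : ℝ) : IsCompact (cube c r) := by
  refine Metric.isCompact_of_isClosed_isBounded (cube_closed c r) ?_
  refine (Metric.isBounded_closedBall (x := c) (r := Real.sqrt N * (|r|/2 + 1))).subset ?_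
  intro y hy
  rw [Metric.mem_closedBall, EuclideanSpace.dist_eq]
  have hb : ∀ i, dist (y i) (c i) ^ 2 ≤ (|r|/2 + 1)^2 := by
    intro i
    have h1 : |y i - c i| ≤ r/2 := hy i
    have h2 : |y i - c i| ≤ |r|/2 + 1 := le_trans h1 (by
      have := le_abs_self r; linarith)
    rw [Real.dist_eq]
    have h0 : (0:ℝ) ≤ |y i - c i| := abs_nonneg _
    nlinarith
  calc Real.sqrt (∑ i, dist (y i) (c i) ^ 2)
      ≤ Real.sqrt (∑ _i : Fin N, (|r|/2 + 1)^2) := by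
        apply Real.sqrt_le_sqrt
        exact Finset.sum_le_sum fun i _ => hb i
    _ = Real.sqrt ((N : ℝ) * (|r|/2 + 1)^2) := by
        rw [Finset.sum_const, Finset.card_univ, Fintype.card_fin, nsmul_eq_mul]
    _ ≤ Real.sqrt N * (|r|/2 + 1) := by
        rw [Real.sqrt_mul (Nat.cast_nonneg N), Real.sqrt_sq (by positivity)]

lemma qfun_support (m : ℕ) (c : RN N) {ℓ : ℝ} (hℓ : 0 < ℓ) (γ : Fin N → ℕ) :
    Function.support (qfun m c ℓ γ) ⊆ cube c (ℓ/2) := by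
  intro y hy
  by_contra hcube
  apply hy
  apply qfun_zero
  simp only [cube, Set.mem_setOf_eq, not_forall, not_le] at hcube
  obtain ⟨i, hi⟩ := hcube
  refine ⟨i, ?_⟩
  rw [abs_div, abs_of_pos hℓ, not_lt, le_div_iff₀ hℓ]
  calc (1/4) * ℓ ≤ ℓ/2/2 := by linarith
    _ ≤ |y i - c i| := le_of_lt hi

lemma qfun_hcs (m : ℕ) (c : RN N) {ℓ : ℝ} (hℓ : 0 < ℓ) (γ : Fin N → ℕ) :
    HasCompactSupport (qfun m c ℓ γ) :=
  HasCompactSupport.intro' (cube_compact c (ℓ/2)) (cube_closed c (ℓ/2))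
    fun y hy => Function.notMem_support.mp (fun hs => hy (qfun_support m c hℓ γ hs))

lemma qfun_cont (m : ℕ) (c : RN N) (ℓ : ℝ) (γ : Fin N → ℕ) :
    Continuous (qfun m c ℓ γ) := by
  apply Continuous.div_const
  exact continuous_finset_prod _ fun i _ =>
    (uu_smooth m (γ i)).continuous.comp (((cont_coord i).sub continuous_const).div_const ℓ)

lemma sh_cont (c : RN N) (ℓ : ℝ) (β : Fin N → ℕ) : Continuous (sh c ℓ β) := by
  apply continuous_finset_prod _ fun i _ => ?_
  exact (Complex.continuous_ofReal.comp
    (((cont_coord i).sub continuous_const).div_const ℓ)).pow (β i)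

lemma sh_q_int (m : ℕ) (c : RN N) {ℓ : ℝ} (hℓ : 0 < ℓ) (β γ : Fin N → ℕ) :
    MeasureTheory.Integrable (fun y : RN N => sh c ℓ β y * (qfun m c ℓ γ y : ℂ)) := by
  apply Continuous.integrable_of_hasCompactSupport
  · exact (sh_cont c ℓ β).mul (Complex.continuous_ofReal.comp (qfun_cont m c ℓ γ))
  · apply HasCompactSupport.mul_left
    exact (qfun_hcs m c hℓ γ).comp_left (g := (Complex.ofReal : ℝ → ℂ)) Complex.ofReal_zero

lemma moment_1d (m : ℕ) (ci : ℝ) {ℓ : ℝ} (hℓ : 0 < ℓ) {b k : ℕ} (hb : b < m) (hk : k < m) :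
    ∫ s : ℝ, ((s - ci) / ℓ) ^ b * uu m k ((s - ci) / ℓ) / ℓ
      = if b = k then 1 else 0 := by
  have h1 : ∀ s : ℝ, ((s - ci) / ℓ) ^ b * uu m k ((s - ci) / ℓ) / ℓ
      = (fun w => (w * ℓ⁻¹) ^ b * uu m k (w * ℓ⁻¹) / ℓ) (s + (-ci)) := by
    intro s
    simp only [div_eq_mul_inv, sub_eq_add_neg]
  rw [MeasureTheory.integral_congr_ae (Filter.Eventually.of_forall h1),
    MeasureTheory.integral_add_right_eq_self (fun w => (w * ℓ⁻¹) ^ b * uu m k (w * ℓ⁻¹) / ℓ) (-ci)]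
  have h2 : ∀ w : ℝ, (w * ℓ⁻¹) ^ b * uu m k (w * ℓ⁻¹) / ℓ
      = (fun t => t ^ b * uu m k t / ℓ) (w * ℓ⁻¹) := by intro w; rfl
  rw [MeasureTheory.integral_congr_ae (Filter.Eventually.of_forall h2),
    MeasureTheory.Measure.integral_comp_inv_mul_right (fun t => t ^ b * uu m k t / ℓ) ℓ]
  rw [abs_of_pos hℓ, smul_eq_mul]
  rw [MeasureTheory.integral_div, uu_moment m hb hk]
  field_simp

lemma key_integral (m : ℕ) (c : RN N) {ℓ : ℝ} (hℓ : 0 < ℓ) {β γ : Fin N → ℕ}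
    (hβ : β ∈ idxLe N (m-1)) (hγ : γ ∈ idxLe N (m-1)) (hm : 1 ≤ m) :
    ∫ y : RN N, sh c ℓ β y * (qfun m c ℓ γ y : ℂ) = if β = γ then 1 else 0 := by
  have hβ' : ∀ i, β i < m := fun i => by
    have h1 : β i ≤ mOrder β := Finset.single_le_sum (f := β) (fun j _ => Nat.zero_le _)
      (Finset.mem_univ i)
    have h2 := mem_idxLe.mp hβ
    omega
  have hγ' : ∀ i, γ i < m := fun i => by
    have h1 : γ i ≤ mOrder γ := Finset.single_le_sum (f := γ) (fun j _ => Nat.zero_le _)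
      (Finset.mem_univ i)
    have h2 := mem_idxLe.mp hγ
    omega
  set h : Fin N → ℝ → ℝ :=
    fun i s => ((s - c i) / ℓ) ^ β i * uu m (γ i) ((s - c i) / ℓ) / ℓ with hh
  have hpoint : ∀ y : RN N, sh c ℓ β y * (qfun m c ℓ γ y : ℂ)
      = ((∏ i, h i (y i) : ℝ) : ℂ) := by
    intro y
    unfold sh qfun
    rw [hh]
    push_cast
    rw [Finset.prod_div_distrib, Finset.prod_mul_distrib]
    have hlN : (ℓ : ℂ) ^ N = ∏ _i : Fin N, (ℓ:ℂ) := by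
      rw [Finset.prod_const, Finset.card_univ, Fintype.card_fin]
    rw [hlN]
    ring
  rw [MeasureTheory.integral_congr_ae (Filter.Eventually.of_forall hpoint)]
  have hofr : ∫ y : RN N, ((∏ i, h i (y i) : ℝ) : ℂ) = ((∫ y : RN N, ∏ i, h i (y i) : ℝ) : ℂ) :=
    integral_ofReal
  rw [hofr]
  have htrans : ∫ y : RN N, ∏ i, h i (y i)
      = ∫ z : (Fin N) → ℝ, ∏ i, h i (z i) := by
    rw [← MeasurePreserving.integral_comp
      ((EuclideanSpace.volume_preserving_symm_measurableEquiv_toLp (Fin N)).symm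
        (MeasurableEquiv.toLp 2 (Fin N → ℝ)).symm)
      (MeasurableEquiv.measurableEmbedding _) (fun y : RN N => ∏ i, h i (y i))]
    rfl
  rw [htrans, MeasureTheory.volume_pi, MeasureTheory.integral_fintype_prod_eq_prod (𝕜 := ℝ) h]
  have hmom : ∀ i, ∫ s : ℝ, h i s = if β i = γ i then (1:ℝ) else 0 := by
    intro i
    rw [hh]
    exact moment_1d m (c i) hℓ (hβ' i) (hγ' i)
  rw [Finset.prod_congr rfl fun i _ => hmom i]
  by_cases hbg : β = γ
  · subst hbg
    simp
  · have : ∃ i, β i ≠ γ i := by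
      by_contra hcon
      push_neg at hcon
      exact hbg (funext hcon)
    obtain ⟨i, hi⟩ := this
    rw [Finset.prod_eq_zero (Finset.mem_univ i) (by rw [if_neg hi]), if_neg hbg]
    simp

end Construction

section Deriv
variable {N : ℕ}

/-- sequential partial derivatives along a list of directions -/
def pdList (L : List (Fin N)) (f : RN N → ℂ) : RN N → ℂ := L.foldr pd f

lemma pd_smooth (i : Fin N) {f : RN N → ℂ} (hf : ContDiff ℝ (⊤:ℕ∞) f) :
    ContDiff ℝ (⊤:ℕ∞) (pd i f) := by
  have h1 : ContDiff ℝ (⊤:ℕ∞) (fderiv ℝ f) := hf.fderiv_right (by simp)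
  exact h1.clm_apply contDiff_const

lemma pdList_smooth (L : List (Fin N)) {f : RN N → ℂ} (hf : ContDiff ℝ (⊤:ℕ∞) f) :
    ContDiff ℝ (⊤:ℕ∞) (pdList L f) := by
  induction L with
  | nil => exact hf
  | cons i L ih => exact pd_smooth i ih

lemma iterate_pd_eq (i : Fin N) (k : ℕ) (f : RN N → ℂ) :
    (pd i)^[k] f = pdList (List.replicate k i) f := by
  induction k with
  | zero => rfl
  | succ n ih =>
    rw [Function.iterate_succ_apply', ih, List.replicate_succ]
    rfl

lemma pdList_append (L1 L2 : List (Fin N)) (f : RN N → ℂ) :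
    pdList (L1 ++ L2) f = pdList L1 (pdList L2 f) := by
  simp [pdList, List.foldr_append]

def dirs (α : Fin N → ℕ) : List (Fin N) := (List.ofFn fun i => List.replicate (α i) i).flatten

lemma dirs_length (α : Fin N → ℕ) : (dirs α).length = mOrder α := by
  unfold dirs mOrder
  rw [List.length_flatten, List.map_ofFn]
  rw [List.sum_ofFn]
  simp

lemma md_eq_pdList (α : Fin N → ℕ) (f : RN N → ℂ) : md α f = pdList (dirs α) f := by
  have H : ∀ (K : List (List (Fin N))) (g : RN N → ℂ),
      ((K.map (fun l (h : RN N → ℂ) => pdList l h)).foldr (· ∘ ·) id) g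
        = pdList K.flatten g := by
    intro K
    induction K with
    | nil => intro g; rfl
    | cons l K ih =>
      intro g
      show pdList l (((K.map (fun l (h : RN N → ℂ) => pdList l h)).foldr (· ∘ ·) id) g) = _
      rw [ih, List.flatten_cons, pdList_append]
  unfold md dirs
  rw [← H, List.map_ofFn]
  have heq : ((fun l (h : RN N → ℂ) => pdList l h) ∘ fun i => List.replicate (α i) i)
      = fun i => (pd i)^[α i] := by
    funext i g
    exact (iterate_pd_eq i (α i) g).symm
  rw [heq]

lemma pd_finsum (i : Fin N) {ι : Type*} (s : Finset ι) (g : ι → ℂ) (f : ι → RN N → ℂ)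
    (hf : ∀ j ∈ s, ContDiff ℝ (⊤:ℕ∞) (f j)) :
    pd i (fun x => ∑ j ∈ s, g j • f j x) = fun x => ∑ j ∈ s, g j • pd i (f j) x := by
  funext x
  unfold pd
  have hd : ∀ j ∈ s, DifferentiableAt ℝ (fun x => g j • f j x) x := fun j hj =>
    (((hf j hj).differentiable (by simp)) x).const_smul (g j)
  rw [fderiv_fun_sum hd]
  rw [ContinuousLinearMap.sum_apply]
  refine Finset.sum_congr rfl fun j hj => ?_
  rw [fderiv_fun_const_smul (((hf j hj).differentiable (by simp)) x) (g j)]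
  rfl

lemma pdList_finsum (L : List (Fin N)) {ι : Type*} (s : Finset ι) (g : ι → ℂ)
    (f : ι → RN N → ℂ) (hf : ∀ j ∈ s, ContDiff ℝ (⊤:ℕ∞) (f j)) :
    pdList L (fun x => ∑ j ∈ s, g j • f j x) = fun x => ∑ j ∈ s, g j • pdList L (f j) x := by
  induction L with
  | nil => rfl
  | cons i L ih =>
    show pd i (pdList L (fun x => ∑ j ∈ s, g j • f j x)) = _
    rw [ih, pd_finsum i s g (fun j => pdList L (f j)) (fun j hj => pdList_smooth L (hf j hj))]
    rfl

lemma md_finsum (α : Fin N → ℕ) {ι : Type*} (s : Finset ι) (g : ι → ℂ)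
    (f : ι → RN N → ℂ) (hf : ∀ j ∈ s, ContDiff ℝ (⊤:ℕ∞) (f j)) :
    md α (fun x => ∑ j ∈ s, g j • f j x) = fun x => ∑ j ∈ s, g j • md α (f j) x := by
  rw [md_eq_pdList, pdList_finsum (dirs α) s g f hf]
  funext x
  exact Finset.sum_congr rfl fun j _ => by rw [md_eq_pdList]

lemma pd_csmul (i : Fin N) (k : ℂ) {f : RN N → ℂ} (hf : ContDiff ℝ (⊤:ℕ∞) f) :
    pd i (fun x => k • f x) = fun x => k • pd i f x := by
  funext x
  unfold pd
  rw [fderiv_fun_const_smul ((hf.differentiable (by simp)) x) k]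
  rfl

lemma pdList_csmul (L : List (Fin N)) (k : ℂ) {f : RN N → ℂ} (hf : ContDiff ℝ (⊤:ℕ∞) f) :
    pdList L (fun x => k • f x) = fun x => k • pdList L f x := by
  induction L with
  | nil => rfl
  | cons i L ih =>
    show pd i (pdList L (fun x => k • f x)) = _
    rw [ih, pd_csmul i k (pdList_smooth L hf)]
    rfl

lemma md_csmul (α : Fin N → ℕ) (k : ℂ) {f : RN N → ℂ} (hf : ContDiff ℝ (⊤:ℕ∞) f) :
    md α (fun x => k • f x) = fun x => k • md α f x := by
  rw [md_eq_pdList, pdList_csmul (dirs α) k hf, md_eq_pdList]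

lemma smooth_affine (r : ℝ) (b : RN N) : ContDiff ℝ (⊤:ℕ∞) (fun x : RN N => r • x + b) :=
  (contDiff_id.const_smul r).add contDiff_const

lemma pd_scale (i : Fin N) (r : ℝ) (b : RN N) {g : RN N → ℂ} (hg : ContDiff ℝ (⊤:ℕ∞) g) :
    pd i (fun x => g (r • x + b)) = fun x => r • pd i g (r • x + b) := by
  funext x
  unfold pd
  have hS : HasFDerivAt (fun x : RN N => r • x + b)
      (r • ContinuousLinearMap.id ℝ (RN N)) x :=
    ((hasFDerivAt_id x).const_smul r).add_const b
  have hg' : HasFDerivAt g (fderiv ℝ g (r • x + b)) (r • x + b) :=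
    ((hg.differentiable (by simp)) (r • x + b)).hasFDerivAt
  have hcomp := hg'.comp x hS
  rw [show fderiv ℝ (fun x => g (r • x + b)) x
    = (fderiv ℝ g (r • x + b)).comp (r • ContinuousLinearMap.id ℝ (RN N)) from hcomp.fderiv]
  simp only [ContinuousLinearMap.comp_apply, ContinuousLinearMap.smul_apply,
    ContinuousLinearMap.id_apply]
  exact (fderiv ℝ g (r • x + b)).map_smul r _

lemma pdList_scale (L : List (Fin N)) (r : ℝ) (b : RN N) {g : RN N → ℂ}
    (hg : ContDiff ℝ (⊤:ℕ∞) g) :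
    pdList L (fun x => g (r • x + b)) = fun x => r ^ L.length • pdList L g (r • x + b) := by
  induction L with
  | nil => funext x; simp [pdList]
  | cons i L ih =>
    show pd i (pdList L (fun x => g (r • x + b))) = _
    rw [ih]
    have h1 : ∀ x : RN N, (r:ℝ) ^ L.length • pdList L g (r • x + b)
        = ((r ^ L.length : ℝ) : ℂ) • pdList L g (r • x + b) := by
      intro x
      rw [Complex.coe_smul]
    rw [funext h1, pd_csmul i _ (f := fun x => pdList L g (r • x + b))
      ((pdList_smooth L hg).comp (smooth_affine r b)),
      pd_scale i r b (pdList_smooth L hg)]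
    funext x
    rw [Complex.coe_smul]
    show (r ^ L.length) • (r • pd i (pdList L g) (r • x + b))
      = r ^ (i::L).length • pd i (pdList L g) (r • x + b)
    rw [List.length_cons, pow_succ, mul_smul]

lemma md_scale (α : Fin N → ℕ) (r : ℝ) (b : RN N) {g : RN N → ℂ}
    (hg : ContDiff ℝ (⊤:ℕ∞) g) :
    md α (fun x => g (r • x + b)) = fun x => r ^ mOrder α • md α g (r • x + b) := by
  rw [md_eq_pdList, pdList_scale (dirs α) r b hg, md_eq_pdList, dirs_length]

lemma pd_support (i : Fin N) (f : RN N → ℂ) :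
    Function.support (pd i f) ⊆ tsupport f := by
  intro x hx
  by_contra hxn
  apply hx
  have hev : f =ᶠ[nhds x] 0 := notMem_tsupport_iff_eventuallyEq.mp hxn
  unfold pd
  rw [hev.fderiv_eq, show (0 : RN N → ℂ) = (fun _ => (0:ℂ)) from rfl, fderiv_fun_const]
  rfl

lemma pdList_tsupport (L : List (Fin N)) (f : RN N → ℂ) :
    tsupport (pdList L f) ⊆ tsupport f := by
  induction L with
  | nil => exact le_refl _
  | cons i L ih =>
    refine subset_trans ?_ ih
    exact closure_minimal (subset_trans (pd_support i (pdList L f)) (le_refl _))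
      isClosed_closure

lemma pdList_hcs (L : List (Fin N)) {f : RN N → ℂ} (hf : HasCompactSupport f) :
    HasCompactSupport (pdList L f) :=
  IsCompact.of_isClosed_subset hf (isClosed_tsupport _) (pdList_tsupport L f)

lemma md_hcs (α : Fin N → ℕ) {f : RN N → ℂ} (hf : HasCompactSupport f) :
    HasCompactSupport (md α f) := by
  rw [md_eq_pdList]
  exact pdList_hcs (dirs α) hf

lemma md_smooth (α : Fin N → ℕ) {f : RN N → ℂ} (hf : ContDiff ℝ (⊤:ℕ∞) f) :
    ContDiff ℝ (⊤:ℕ∞) (md α f) := by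
  rw [md_eq_pdList]
  exact pdList_smooth (dirs α) hf

end Deriv

section Assemble
variable {N : ℕ}

def qC (m : ℕ) (c : RN N) (ℓ : ℝ) (γ : Fin N → ℕ) : RN N → ℂ :=
  fun y => (qfun m c ℓ γ y : ℂ)

lemma coord_smooth (i : Fin N) : ContDiff ℝ (⊤:ℕ∞) (fun y : RN N => y i) :=
  (EuclideanSpace.proj (𝕜 := ℝ) i).contDiff

lemma coord_affine_smooth (i : Fin N) (ci ℓ : ℝ) :
    ContDiff ℝ (⊤:ℕ∞) (fun y : RN N => (y i - ci) / ℓ) :=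
  ((coord_smooth i).sub contDiff_const).div_const ℓ

lemma sh_smooth (c : RN N) (ℓ : ℝ) (β : Fin N → ℕ) : ContDiff ℝ (⊤:ℕ∞) (sh c ℓ β) := by
  apply contDiff_prod fun i _ => ?_
  exact (Complex.ofRealCLM.contDiff.comp (coord_affine_smooth i (c i) ℓ)).pow (β i)

lemma qfun_smooth (m : ℕ) (c : RN N) (ℓ : ℝ) (γ : Fin N → ℕ) :
    ContDiff ℝ (⊤:ℕ∞) (qfun m c ℓ γ) := by
  apply ContDiff.div_const
  exact contDiff_prod fun i _ =>
    (uu_smooth m (γ i)).comp (coord_affine_smooth i (c i) ℓ)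

lemma qC_smooth (m : ℕ) (c : RN N) (ℓ : ℝ) (γ : Fin N → ℕ) :
    ContDiff ℝ (⊤:ℕ∞) (qC m c ℓ γ) :=
  Complex.ofRealCLM.contDiff.comp (qfun_smooth m c ℓ γ)

lemma mono_smooth (γ : Fin N → ℕ) : ContDiff ℝ (⊤:ℕ∞) (mono γ) := by
  apply contDiff_prod fun i _ => ?_
  exact (Complex.ofRealCLM.contDiff.comp (coord_smooth i)).pow (γ i)

def UU0 (m : ℕ) (γ : Fin N → ℕ) : RN N → ℂ :=
  fun z => ((∏ i, uu m (γ i) (z i) : ℝ) : ℂ)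

lemma UU0_smooth (m : ℕ) (γ : Fin N → ℕ) : ContDiff ℝ (⊤:ℕ∞) (UU0 m γ) := by
  have h : ContDiff ℝ (⊤:ℕ∞) (fun z : RN N => ∏ i, uu m (γ i) (z i)) :=
    contDiff_prod fun i _ => (uu_smooth m (γ i)).comp (coord_smooth i)
  exact Complex.ofRealCLM.contDiff.comp h

lemma UU0_hcs (m : ℕ) (γ : Fin N → ℕ) : HasCompactSupport (UU0 m γ) := by
  apply HasCompactSupport.intro' (cube_compact (0 : RN N) (1/2)) (cube_closed _ _)
  intro z hz
  have hex : ∃ i, ¬ |z i| < 1/4 := by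
    by_contra hcon
    push_neg at hcon
    apply hz
    intro i
    show |z i - (0:RN N) i| ≤ 1/2/2
    have h0 : (0:RN N) i = (0:ℝ) := rfl
    rw [h0, sub_zero]
    linarith [hcon i]
  obtain ⟨i, hi⟩ := hex
  unfold UU0
  rw [Finset.prod_eq_zero (Finset.mem_univ i) (uu_zero m (γ i) hi)]
  simp

lemma coord_affine (r : ℝ) (b x : RN N) (i : Fin N) : (r • x + b) i = r * x i + b i := rfl

lemma sh_eq (c : RN N) (ℓ : ℝ) (γ : Fin N → ℕ) :
    sh c ℓ γ = fun x => mono γ (ℓ⁻¹ • x + (-ℓ⁻¹) • c) := by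
  funext x
  unfold sh mono
  refine Finset.prod_congr rfl fun i _ => ?_
  rw [coord_affine]
  congr 2
  show (x i - c i) / ℓ = ℓ⁻¹ * x i + ((-ℓ⁻¹) • c) i
  have : ((-ℓ⁻¹) • c) i = -ℓ⁻¹ * c i := rfl
  rw [this]
  field_simp
  ring

lemma qC_eq (m : ℕ) (c : RN N) (ℓ : ℝ) (γ : Fin N → ℕ) :
    qC m c ℓ γ = fun y => (((ℓ ^ N)⁻¹ : ℝ) : ℂ) • UU0 m γ (ℓ⁻¹ • y + (-ℓ⁻¹) • c) := by
  funext y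
  unfold qC qfun UU0
  have hco : ∀ i, (ℓ⁻¹ • y + (-ℓ⁻¹) • c) i = (y i - c i) / ℓ := by
    intro i
    rw [coord_affine]
    show ℓ⁻¹ * y i + -ℓ⁻¹ * c i = _
    field_simp
    ring
  simp only [hco]
  rw [smul_eq_mul, div_eq_mul_inv]
  push_cast
  ring

/-- bound for monomial derivatives on cubes -/
def B1 (N : ℕ) (a : ℝ) (α γ : Fin N → ℕ) : ℝ :=
  max (Classical.choose ((cube_compact (0:RN N) a).exists_bound_of_continuousOn
    ((md_smooth α (mono_smooth γ)).continuous.continuousOn))) 0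

lemma B1_nonneg (a : ℝ) (α γ : Fin N → ℕ) : 0 ≤ B1 N a α γ := le_max_right _ _

lemma B1_spec (a : ℝ) (α γ : Fin N → ℕ) {z : RN N} (hz : z ∈ cube (0:RN N) a) :
    ‖md α (mono γ) z‖ ≤ B1 N a α γ :=
  le_trans (Classical.choose_spec ((cube_compact (0:RN N) a).exists_bound_of_continuousOn
    ((md_smooth α (mono_smooth γ)).continuous.continuousOn)) z hz) (le_max_left _ _)

/-- bound for derivatives of the compactly supported factor -/
def B2 (N m : ℕ) (β γ : Fin N → ℕ) : ℝ :=
  max (Classical.choose ((md_hcs β (UU0_hcs m γ)).exists_bound_of_continuous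
    (md_smooth β (UU0_smooth m γ)).continuous)) 0

lemma B2_nonneg (m : ℕ) (β γ : Fin N → ℕ) : 0 ≤ B2 N m β γ := le_max_right _ _

lemma B2_spec (m : ℕ) (β γ : Fin N → ℕ) (z : RN N) :
    ‖md β (UU0 m γ) z‖ ≤ B2 N m β γ :=
  le_trans (Classical.choose_spec ((md_hcs β (UU0_hcs m γ)).exists_bound_of_continuous
    (md_smooth β (UU0_smooth m γ)).continuous) z) (le_max_left _ _)

end Assemble

section Final
variable {N : ℕ}

def phiQ (m : ℕ) (c : RN N) (ℓ : ℝ) : RN N → RN N → ℂ :=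
  fun x y => ∑ γ ∈ idxLe N (m-1), sh c ℓ γ x * qC m c ℓ γ y

lemma sh_md_bound (m : ℕ) (c : RN N) {ℓ : ℝ} (hℓ : 0 < ℓ) {a : ℝ}
    (α γ : Fin N → ℕ) {x : RN N} (hx : x ∈ cube c (a * ℓ)) :
    ‖md α (sh c ℓ γ) x‖ ≤ (ℓ⁻¹) ^ (mOrder α) * B1 N a α γ := by
  rw [sh_eq, md_scale α ℓ⁻¹ ((-ℓ⁻¹) • c) (mono_smooth γ)]
  rw [norm_smul, Real.norm_eq_abs, abs_pow, abs_of_pos (inv_pos.mpr hℓ)]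
  apply mul_le_mul_of_nonneg_left _ (by positivity)
  apply B1_spec
  intro i
  have hxi : |x i - c i| ≤ a * ℓ / 2 := hx i
  have hco : (ℓ⁻¹ • x + (-ℓ⁻¹) • c) i - (0:RN N) i = ℓ⁻¹ * (x i - c i) := by
    rw [coord_affine]
    show ℓ⁻¹ * x i + (-ℓ⁻¹ • c) i - (0:ℝ) = _
    have h1 : ((-ℓ⁻¹ : ℝ) • c) i = -ℓ⁻¹ * c i := rfl
    rw [h1]
    ring
  rw [hco, abs_mul, abs_of_pos (inv_pos.mpr hℓ)]
  rw [inv_mul_le_iff₀ hℓ]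
  calc |x i - c i| ≤ a * ℓ / 2 := hxi
    _ = ℓ * (a / 2) := by ring

lemma qC_md_bound (m : ℕ) (c : RN N) {ℓ : ℝ} (hℓ : 0 < ℓ)
    (β γ : Fin N → ℕ) (y : RN N) :
    ‖md β (qC m c ℓ γ) y‖ ≤ (ℓ ^ N)⁻¹ * (ℓ⁻¹) ^ (mOrder β) * B2 N m β γ := by
  rw [qC_eq]
  have hUU : ContDiff ℝ (⊤:ℕ∞) (fun y : RN N => UU0 m γ (ℓ⁻¹ • y + (-ℓ⁻¹) • c)) :=
    (UU0_smooth m γ).comp (smooth_affine ℓ⁻¹ _)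
  rw [md_csmul β _ (f := fun y : RN N => UU0 m γ (ℓ⁻¹ • y + (-ℓ⁻¹) • c)) hUU]
  rw [md_scale β ℓ⁻¹ ((-ℓ⁻¹) • c) (UU0_smooth m γ)]
  rw [norm_smul, norm_smul, Real.norm_eq_abs, abs_pow, abs_of_pos (inv_pos.mpr hℓ)]
  have hnr : ‖(((ℓ ^ N)⁻¹ : ℝ) : ℂ)‖ = (ℓ ^ N)⁻¹ := by
    rw [Complex.norm_real, Real.norm_eq_abs, abs_of_pos (by positivity)]
  rw [hnr, mul_assoc]
  apply mul_le_mul_of_nonneg_left _ (by positivity)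
  apply mul_le_mul_of_nonneg_left _ (by positivity)
  exact B2_spec m β γ _

lemma phi_est (m : ℕ) (c : RN N) {ℓ : ℝ} (hℓ : 0 < ℓ) (a : ℝ)
    (α β : Fin N → ℕ) {x : RN N} (hx : x ∈ cube c (a * ℓ)) (y : RN N) :
    ‖md α (fun x' => md β (fun y' => phiQ m c ℓ x' y') y) x‖ ≤
      ((∑ γ ∈ idxLe N (m-1), B1 N a α γ * B2 N m β γ) + 1) / ℓ ^ (N + mOrder α + mOrder β) := by
  have hinner : ∀ x', (fun y' => phiQ m c ℓ x' y')
      = fun y' => ∑ γ ∈ idxLe N (m-1), (sh c ℓ γ x') • qC m c ℓ γ y' := by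
    intro x'
    funext y'
    exact Finset.sum_congr rfl fun γ _ => rfl
  have hmdin : ∀ x', md β (fun y' => phiQ m c ℓ x' y')
      = fun y' => ∑ γ ∈ idxLe N (m-1), (sh c ℓ γ x') • md β (qC m c ℓ γ) y' := by
    intro x'
    rw [hinner x', md_finsum β _ _ _ (fun γ _ => qC_smooth m c ℓ γ)]
  have houter : (fun x' => md β (fun y' => phiQ m c ℓ x' y') y)
      = fun x' => ∑ γ ∈ idxLe N (m-1), (md β (qC m c ℓ γ) y) • sh c ℓ γ x' := by
    funext x'
    rw [hmdin x']
    refine Finset.sum_congr rfl fun γ _ => ?_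
    rw [smul_eq_mul, smul_eq_mul, mul_comm]
  rw [houter, md_finsum α _ _ _ (fun γ _ => sh_smooth c ℓ γ)]
  calc ‖∑ γ ∈ idxLe N (m-1), (md β (qC m c ℓ γ) y) • md α (sh c ℓ γ) x‖
      ≤ ∑ γ ∈ idxLe N (m-1), ‖(md β (qC m c ℓ γ) y) • md α (sh c ℓ γ) x‖ :=
        norm_sum_le _ _
    _ ≤ ∑ γ ∈ idxLe N (m-1),
        (B1 N a α γ * B2 N m β γ) * (ℓ ^ (N + mOrder α + mOrder β))⁻¹ := by
        refine Finset.sum_le_sum fun γ _ => ?_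
        rw [norm_smul]
        have h1 := qC_md_bound m c hℓ β γ y
        have h2 := sh_md_bound m c hℓ α γ hx
        calc ‖md β (qC m c ℓ γ) y‖ * ‖md α (sh c ℓ γ) x‖
            ≤ ((ℓ ^ N)⁻¹ * (ℓ⁻¹) ^ (mOrder β) * B2 N m β γ)
              * ((ℓ⁻¹) ^ (mOrder α) * B1 N a α γ) := by
              have hb2 := B2_nonneg (N := N) m β γ
              apply mul_le_mul h1 h2 (norm_nonneg _) (by positivity)
          _ = (B1 N a α γ * B2 N m β γ) * (ℓ ^ (N + mOrder α + mOrder β))⁻¹ := by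
              rw [inv_pow, inv_pow, pow_add, pow_add, mul_inv, mul_inv]
              ring
    _ = (∑ γ ∈ idxLe N (m-1), B1 N a α γ * B2 N m β γ)
          / ℓ ^ (N + mOrder α + mOrder β) := by
        rw [← Finset.sum_mul, div_eq_mul_inv]
    _ ≤ ((∑ γ ∈ idxLe N (m-1), B1 N a α γ * B2 N m β γ) + 1)
          / ℓ ^ (N + mOrder α + mOrder β) := by
        gcongr
        linarith

end Final

section Props
variable {N : ℕ}

lemma phi_smooth (m : ℕ) (c : RN N) (ℓ : ℝ) :
    ContDiff ℝ (⊤:ℕ∞) (fun z : RN N × RN N => phiQ m c ℓ z.1 z.2) := by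
  apply ContDiff.sum fun γ _ => ?_
  exact ((sh_smooth c ℓ γ).comp contDiff_fst).mul ((qC_smooth m c ℓ γ).comp contDiff_snd)

lemma phi_supp (m : ℕ) (c : RN N) {ℓ : ℝ} (hℓ : 0 < ℓ) (x : RN N) :
    tsupport (phiQ m c ℓ x) ⊆ openCube c ℓ := by
  have hsupp : Function.support (phiQ m c ℓ x) ⊆ cube c (ℓ/2) := by
    intro y hy
    by_contra hyc
    apply hy
    have hq : ∀ γ, qfun m c ℓ γ y = 0 := fun γ =>
      Function.notMem_support.mp (fun hs => hyc (qfun_support m c hℓ γ hs))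
    unfold phiQ qC
    simp [hq]
  have hts : tsupport (phiQ m c ℓ x) ⊆ cube c (ℓ/2) :=
    closure_minimal hsupp (cube_closed c (ℓ/2))
  refine subset_trans hts ?_
  intro y hy i
  have h1 := hy i
  calc |y i - c i| ≤ ℓ/2/2 := h1
    _ < ℓ/2 := by linarith

lemma isPoly_const_mul {d : ℕ} {P : RN N → ℂ} (k : ℂ) (hP : IsPolyDegLE N d P) :
    IsPolyDegLE N d (fun x => k * P x) := by
  obtain ⟨cf, hcf⟩ := hP
  refine ⟨fun γ => k * cf γ, fun x => ?_⟩
  show k * P x = _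
  rw [hcf x, Finset.mul_sum]
  exact Finset.sum_congr rfl fun γ _ => by ring

lemma sh_qC_int (m : ℕ) (c : RN N) {ℓ : ℝ} (hℓ : 0 < ℓ) (β γ : Fin N → ℕ) :
    MeasureTheory.Integrable (fun y : RN N => sh c ℓ β y * qC m c ℓ γ y) :=
  sh_q_int m c hℓ β γ

lemma key_integral' (m : ℕ) (c : RN N) {ℓ : ℝ} (hℓ : 0 < ℓ) {β γ : Fin N → ℕ}
    (hβ : β ∈ idxLe N (m-1)) (hγ : γ ∈ idxLe N (m-1)) (hm : 1 ≤ m) :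
    ∫ y : RN N, sh c ℓ β y * qC m c ℓ γ y = if β = γ then 1 else 0 :=
  key_integral m c hℓ hβ hγ hm

lemma phi_polyint (m : ℕ) (c : RN N) {ℓ : ℝ} (hℓ : 0 < ℓ)
    (f : RN N → ℂ) (hf : MeasureTheory.IntegrableOn f (cube c ℓ)) :
    IsPolyDegLE N (m-1) fun x => ∫ y in cube c ℓ, f y * phiQ m c ℓ x y := by
  have hqb : ∀ γ : Fin N → ℕ, ∃ Cq, ∀ y, ‖qC m c ℓ γ y‖ ≤ Cq := fun γ =>
    HasCompactSupport.exists_bound_of_continuous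
      ((qfun_hcs m c hℓ γ).comp_left (g := (Complex.ofReal : ℝ → ℂ)) Complex.ofReal_zero)
      (Complex.continuous_ofReal.comp (qfun_cont m c ℓ γ))
  have hint : ∀ γ : Fin N → ℕ,
      MeasureTheory.IntegrableOn (fun y => f y * qC m c ℓ γ y) (cube c ℓ) := by
    intro γ
    have h1 : MeasureTheory.IntegrableOn (fun y => qC m c ℓ γ y * f y) (cube c ℓ) :=
      hf.bdd_mul ((Complex.continuous_ofReal.comp
        (qfun_cont m c ℓ γ)).aestronglyMeasurable) (Filter.Eventually.of_forall (hqb γ).choose_spec)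
    exact h1.congr (Filter.Eventually.of_forall fun y => mul_comm _ _)
  have heq : (fun x => ∫ y in cube c ℓ, f y * phiQ m c ℓ x y)
      = fun x => ∑ γ ∈ idxLe N (m-1),
          (∫ y in cube c ℓ, f y * qC m c ℓ γ y) * sh c ℓ γ x := by
    funext x
    have h1 : ∀ y, f y * phiQ m c ℓ x y
        = ∑ γ ∈ idxLe N (m-1), sh c ℓ γ x * (f y * qC m c ℓ γ y) := by
      intro y
      unfold phiQ
      rw [Finset.mul_sum]
      exact Finset.sum_congr rfl fun γ _ => by ring
    rw [MeasureTheory.integral_congr_ae (Filter.Eventually.of_forall h1)]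
    rw [MeasureTheory.integral_finset_sum _
      (fun γ _ => ((hint γ).const_mul (sh c ℓ γ x)))]
    refine Finset.sum_congr rfl fun γ _ => ?_
    rw [MeasureTheory.integral_const_mul]
    ring
  rw [heq]
  apply isPoly_sum
  intro γ hγ
  exact isPoly_const_mul _ (sh_isPoly c (ne_of_gt hℓ) hγ)

lemma phi_repro (m : ℕ) (hm : 1 ≤ m) (c : RN N) {ℓ : ℝ} (hℓ : 0 < ℓ)
    (P : RN N → ℂ) (hP : IsPolyDegLE N (m-1) P) (x : RN N) :
    P x = ∫ y, P y * phiQ m c ℓ x y := by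
  obtain ⟨cf, hcf⟩ := isPoly_sh_rep hP c (ne_of_gt hℓ)
  have hPy : ∀ (γ : Fin N → ℕ) (y : RN N), P y * qC m c ℓ γ y
      = ∑ β ∈ idxLe N (m-1), cf β * (sh c ℓ β y * qC m c ℓ γ y) := by
    intro γ y
    rw [hcf y, Finset.sum_mul]
    exact Finset.sum_congr rfl fun β _ => by ring
  have hPint : ∀ γ : Fin N → ℕ,
      MeasureTheory.Integrable (fun y => P y * qC m c ℓ γ y) := by
    intro γ
    refine (MeasureTheory.integrable_finset_sum _
      (fun β _ => (sh_qC_int m c hℓ β γ).const_mul (cf β))).congr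
      (Filter.Eventually.of_forall fun y => (hPy γ y).symm)
  have hIq : ∀ γ ∈ idxLe N (m-1), ∫ y, P y * qC m c ℓ γ y = cf γ := by
    intro γ hγ
    rw [MeasureTheory.integral_congr_ae (Filter.Eventually.of_forall (hPy γ))]
    rw [MeasureTheory.integral_finset_sum _
      (fun β _ => (sh_qC_int m c hℓ β γ).const_mul (cf β))]
    have hterm : ∀ β ∈ idxLe N (m-1),
        ∫ y, cf β * (sh c ℓ β y * qC m c ℓ γ y)
          = cf β * (if β = γ then 1 else 0) := by
      intro β hβ
      rw [MeasureTheory.integral_const_mul]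
      congr 1
      exact key_integral' m c hℓ hβ hγ hm
    rw [Finset.sum_congr rfl hterm]
    rw [Finset.sum_eq_single γ]
    · rw [if_pos rfl, mul_one]
    · intro β _ hβγ
      rw [if_neg hβγ, mul_zero]
    · intro hγn
      exact absurd hγ hγn
  have h2 : ∀ y, P y * phiQ m c ℓ x y
      = ∑ γ ∈ idxLe N (m-1), sh c ℓ γ x * (P y * qC m c ℓ γ y) := by
    intro y
    unfold phiQ
    rw [Finset.mul_sum]
    exact Finset.sum_congr rfl fun γ _ => by ring
  rw [MeasureTheory.integral_congr_ae (Filter.Eventually.of_forall h2)]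
  rw [MeasureTheory.integral_finset_sum _
    (fun γ _ => (hPint γ).const_mul (sh c ℓ γ x))]
  have h3 : ∀ γ ∈ idxLe N (m-1),
      ∫ y, sh c ℓ γ x * (P y * qC m c ℓ γ y) = cf γ * sh c ℓ γ x := by
    intro γ hγ
    rw [MeasureTheory.integral_const_mul, hIq γ hγ]
    ring
  rw [Finset.sum_congr rfl h3]
  exact hcf x

end Props

end St2

/-- Miyachi's construction of local polynomial projections (Lemma 4 of Miyachi). -/
theorem statement2 (N m : ℕ) (hN : 1 ≤ N) (hm : 1 ≤ m) :
    ∃ C : ℝ → (Fin N → ℕ) → (Fin N → ℕ) → ℝ,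
      (∀ a α β, 0 < C a α β) ∧
      ∀ (xQ : RN N) (ℓ : ℝ), 0 < ℓ →
        ∃ φQ : RN N → RN N → ℂ,
          ContDiff ℝ (⊤ : ℕ∞) (fun z : RN N × RN N => φQ z.1 z.2) ∧
          (∀ x, tsupport (φQ x) ⊆ openCube xQ ℓ) ∧
          (∀ f : RN N → ℂ, IntegrableOn f (cube xQ ℓ) →
            IsPolyDegLE N (m - 1) fun x => ∫ y in cube xQ ℓ, f y * φQ x y) ∧
          (∀ P : RN N → ℂ, IsPolyDegLE N (m - 1) P → ∀ x, P x = ∫ y, P y * φQ x y) ∧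
          (∀ a : ℝ, 0 < a → ∀ α β : Fin N → ℕ, ∀ x ∈ cube xQ (a * ℓ), ∀ y : RN N,
            ‖md α (fun x' => md β (fun y' => φQ x' y') y) x‖ ≤
              C a α β / ℓ ^ (N + mOrder α + mOrder β)) := by
  classical
  refine ⟨fun a α β => (∑ γ ∈ idxLe N (m-1), St2.B1 N a α γ * St2.B2 N m β γ) + 1, ?_, ?_⟩
  · intro a α β
    have h : 0 ≤ ∑ γ ∈ idxLe N (m-1), St2.B1 N a α γ * St2.B2 N m β γ :=
      Finset.sum_nonneg fun γ _ => mul_nonneg (St2.B1_nonneg a α γ) (St2.B2_nonneg m β γ)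
    show (0:ℝ) < ∑ γ ∈ idxLe N (m-1), St2.B1 N a α γ * St2.B2 N m β γ + 1
    linarith
  · intro xQ ℓ hℓ
    refine ⟨St2.phiQ m xQ ℓ, St2.phi_smooth m xQ ℓ, St2.phi_supp m xQ hℓ,
      fun f hf => St2.phi_polyint m xQ hℓ f hf,
      fun P hP x => St2.phi_repro m hm xQ hℓ P hP x, ?_⟩
    intro a ha α β x hx y
    exact St2.phi_est m xQ hℓ a α β hx y
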